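/- Let Γ > 0 and let ν be a Borel probability measure on ℝ. Then there exists a Borel probability measure μ on ℝ, supported on [0, Γ], that is invariant for the finite-buffer recursion: if E and η are independent random variables with E ∼ μ and η ∼ ν, then min(Γ, max(0, E + η)) ∼ μ. Equivalently, the pushforward of the product measure μ ⊗ ν under the map (e, y) ↦ min(Γ, max(0, e + y)) equals μ. -/

import Mathlib

open MeasureTheory Set Filter Topology
open scoped ENNReal

namespace Stmt12Aux

variable (Γ : ℝ) (ν : Measure ℝ)

/-- The one-step CDF operator (with clamping). -/
noncomputable def Tfun (F : ℝ → ℝ≥0∞) (x : ℝ) : ℝ≥0∞ :=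
  if x < 0 then 0 else if Γ ≤ x then 1 else min 1 (∫⁻ y, F (x - y) ∂ν)

lemma Tfun_le_one (F : ℝ → ℝ≥0∞) (x : ℝ) : Tfun Γ ν F x ≤ 1 := by
  unfold Tfun; split_ifs
  · exact zero_le'
  · exact le_rfl
  · exact min_le_left _ _

lemma Tfun_mono_x (F : ℝ →o ℝ≥0∞) : Monotone (Tfun Γ ν F) := by
  intro x₁ x₂ h
  unfold Tfun
  by_cases h1 : x₁ < 0
  · rw [if_pos h1]; exact zero_le'
  · have h1' : ¬ x₂ < 0 := fun h2 => h1 (h.trans_lt h2)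
    rw [if_neg h1, if_neg h1']
    by_cases h2 : Γ ≤ x₂
    · rw [if_pos h2]
      split_ifs
      · exact le_rfl
      · exact min_le_left _ _
    · have h2' : ¬ Γ ≤ x₁ := fun h3 => h2 (h3.trans h)
      rw [if_neg h2', if_neg h2]
      exact min_le_min le_rfl (lintegral_mono fun y => F.mono (by linarith))

/-- The operator as a monotone map on monotone functions. -/
noncomputable def T : (ℝ →o ℝ≥0∞) →o (ℝ →o ℝ≥0∞) where
  toFun F := ⟨Tfun Γ ν F, Tfun_mono_x Γ ν F⟩
  monotone' := by
    intro F₁ F₂ hF x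
    show Tfun Γ ν F₁ x ≤ Tfun Γ ν F₂ x
    unfold Tfun
    split_ifs
    · exact le_rfl
    · exact le_rfl
    · exact min_le_min le_rfl (lintegral_mono fun y => hF _)

/-- The least fixed point: a monotone ℝ≥0∞-valued "CDF". -/
noncomputable def F₀ : ℝ →o ℝ≥0∞ := (T Γ ν).lfp

lemma F₀_le_one (x : ℝ) : F₀ Γ ν x ≤ 1 := by
  have h : (T Γ ν) (OrderHom.const ℝ (1 : ℝ≥0∞)) ≤ OrderHom.const ℝ (1 : ℝ≥0∞) :=
    fun x => Tfun_le_one Γ ν _ x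
  exact (T Γ ν).lfp_le h x

lemma F₀_ne_top (x : ℝ) : F₀ Γ ν x ≠ ⊤ :=
  ne_top_of_le_ne_top ENNReal.one_ne_top (F₀_le_one Γ ν x)

lemma F₀_fix (x : ℝ) : Tfun Γ ν (F₀ Γ ν) x = F₀ Γ ν x := by
  have h : (T Γ ν) ((T Γ ν).lfp) = (T Γ ν).lfp := (T Γ ν).map_lfp
  exact congrFun (congrArg (fun (G : ℝ →o ℝ≥0∞) => (G : ℝ → ℝ≥0∞)) h) x

lemma F₀_neg {x : ℝ} (hx : x < 0) : F₀ Γ ν x = 0 := by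
  rw [← F₀_fix, Tfun, if_pos hx]

lemma F₀_ge (hΓ : 0 < Γ) {x : ℝ} (hx : Γ ≤ x) : F₀ Γ ν x = 1 := by
  rw [← F₀_fix, Tfun, if_neg (by linarith), if_pos hx]

lemma lintegral_F₀_le_one [IsProbabilityMeasure ν] (z : ℝ) :
    ∫⁻ y, F₀ Γ ν (z - y) ∂ν ≤ 1 := by
  calc ∫⁻ y, F₀ Γ ν (z - y) ∂ν ≤ ∫⁻ _, 1 ∂ν := lintegral_mono fun y => F₀_le_one Γ ν _
  _ = 1 := by simp

lemma F₀_mid [IsProbabilityMeasure ν] {x : ℝ} (hx0 : 0 ≤ x) (hxΓ : x < Γ) :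
    F₀ Γ ν x = ∫⁻ y, F₀ Γ ν (x - y) ∂ν := by
  rw [← F₀_fix, Tfun, if_neg (by linarith), if_neg (by linarith)]
  exact min_eq_right (lintegral_F₀_le_one Γ ν x)

/-- The real-valued CDF candidate. -/
noncomputable def g (x : ℝ) : ℝ := (F₀ Γ ν x).toReal

lemma g_mono : Monotone (g Γ ν) := fun a b h =>
  ENNReal.toReal_mono (F₀_ne_top Γ ν b) ((F₀ Γ ν).mono h)

lemma ofReal_g (x : ℝ) : ENNReal.ofReal (g Γ ν x) = F₀ Γ ν x :=
  ENNReal.ofReal_toReal (F₀_ne_top Γ ν x)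

/-- Right-continuous modification. -/
noncomputable def S : StieltjesFunction ℝ := (g_mono Γ ν).stieltjesFunction

noncomputable def Fp (x : ℝ) : ℝ≥0∞ := ENNReal.ofReal (S Γ ν x)

noncomputable def c (n : ℕ) : ℝ := ((n : ℝ) + 1)⁻¹

lemma c_pos (n : ℕ) : 0 < c n := by
  unfold c; positivity

lemma c_anti : Antitone c := by
  intro m n h
  unfold c
  apply inv_anti₀ (by positivity)
  have : (m : ℝ) ≤ n := Nat.cast_le.mpr h
  linarith

lemma c_tendsto : Tendsto c atTop (𝓝 0) := by
  have := tendsto_one_div_add_atTop_nhds_zero_nat (𝕜 := ℝ)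
  simp only [one_div] at this; exact this

lemma c_small {ε : ℝ} (hε : 0 < ε) : ∃ n, c n < ε := by
  obtain ⟨n, hn⟩ := exists_nat_gt ε⁻¹
  refine ⟨n, ?_⟩
  have h1 : ε⁻¹ < (n : ℝ) + 1 := hn.trans (lt_add_one _)
  have h2 : (0:ℝ) < (n : ℝ) + 1 := by positivity
  calc c n = ((n:ℝ) + 1)⁻¹ := rfl
  _ < (ε⁻¹)⁻¹ := by
      apply inv_strictAnti₀ (by positivity) h1
  _ = ε := inv_inv ε

lemma iInf_shift {a : ℕ → ℝ≥0∞} (ha : Antitone a) (N : ℕ) :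
    ⨅ n, a n = ⨅ n, a (n + N) := by
  apply le_antisymm
  · exact le_iInf fun n => iInf_le a (n + N)
  · exact le_iInf fun n => (iInf_le (fun k => a (k + N)) n).trans (ha (Nat.le_add_right n N))

lemma Fp_eq_iInf (x : ℝ) : Fp Γ ν x = ⨅ n : ℕ, F₀ Γ ν (x + c n) := by
  have hseq : Tendsto (fun n : ℕ => x + c n) atTop (𝓝[>] x) := by
    apply tendsto_nhdsWithin_of_tendsto_nhds_of_eventually_within
    · simpa using tendsto_const_nhds.add c_tendsto
    · exact Eventually.of_forall fun n => by
        simp only [mem_Ioi]; linarith [c_pos n]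
  have h1 : Tendsto (fun n : ℕ => g Γ ν (x + c n)) atTop (𝓝 (S Γ ν x)) :=
    ((g_mono Γ ν).tendsto_rightLim x).comp hseq
  have h2 : Tendsto (fun n : ℕ => F₀ Γ ν (x + c n)) atTop (𝓝 (Fp Γ ν x)) := by
    have := (ENNReal.continuous_ofReal.tendsto (S Γ ν x)).comp h1
    simpa [Function.comp_def, ofReal_g, Fp] using this
  have hanti : Antitone (fun n : ℕ => F₀ Γ ν (x + c n)) := fun m n h =>
    (F₀ Γ ν).mono (by linarith [c_anti h])
  exact tendsto_nhds_unique h2 (tendsto_atTop_iInf hanti)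

lemma Fp_neg {x : ℝ} (hx : x < 0) : Fp Γ ν x = 0 := by
  rw [Fp_eq_iInf]
  have : ∀ n, x + c n ≤ x + c 0 := fun n => by linarith [c_anti (Nat.zero_le n)]
  apply le_antisymm _ zero_le'
  obtain ⟨n, hn⟩ := c_small (show (0:ℝ) < -x by linarith)
  calc ⨅ n, F₀ Γ ν (x + c n) ≤ F₀ Γ ν (x + c n) := iInf_le _ n
  _ = 0 := F₀_neg Γ ν (by linarith)

lemma Fp_ge (hΓ : 0 < Γ) {x : ℝ} (hx : Γ ≤ x) : Fp Γ ν x = 1 := by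
  rw [Fp_eq_iInf]
  have : ∀ n : ℕ, F₀ Γ ν (x + c n) = 1 := fun n => F₀_ge Γ ν hΓ (by linarith [c_pos n])
  simp [this]

lemma Fp_mid [IsProbabilityMeasure ν] {x : ℝ} (hx0 : 0 ≤ x) (hxΓ : x < Γ) :
    Fp Γ ν x = ∫⁻ y, Fp Γ ν (x - y) ∂ν := by
  obtain ⟨N, hN⟩ := c_small (show (0:ℝ) < Γ - x by linarith)
  have hanti : Antitone (fun n : ℕ => F₀ Γ ν (x + c n)) := fun m n h =>
    (F₀ Γ ν).mono (by linarith [c_anti h])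
  have hlt : ∀ n : ℕ, x + c (n + N) < Γ := fun n => by
    have := c_anti (Nat.le_add_left N n)
    linarith
  have hge : ∀ n : ℕ, 0 ≤ x + c (n + N) := fun n => by linarith [c_pos (n + N)]
  have key : Fp Γ ν x = ⨅ n : ℕ, ∫⁻ y, F₀ Γ ν (x + c (n + N) - y) ∂ν := by
    rw [Fp_eq_iInf, iInf_shift hanti N]
    exact iInf_congr fun n => F₀_mid Γ ν (hge n) (hlt n)
  rw [key, ← lintegral_iInf]
  · apply lintegral_congr fun y => ?_
    have harr : ∀ k : ℕ, x + c k - y = (x - y) + c k := fun k => by ring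
    have hanti2 : Antitone (fun n : ℕ => F₀ Γ ν ((x - y) + c n)) := fun m n h =>
      (F₀ Γ ν).mono (by linarith [c_anti h])
    calc ⨅ n, F₀ Γ ν (x + c (n + N) - y)
        = ⨅ n, F₀ Γ ν ((x - y) + c (n + N)) := by simp_rw [harr]
      _ = ⨅ n, F₀ Γ ν ((x - y) + c n) := (iInf_shift hanti2 N).symm
      _ = Fp Γ ν (x - y) := (Fp_eq_iInf Γ ν (x - y)).symm
  · intro n
    have : Antitone (fun y => F₀ Γ ν (x + c (n + N) - y)) := fun a b h =>
      (F₀ Γ ν).mono (by linarith)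
    exact this.measurable
  · intro m n h
    exact fun y => (F₀ Γ ν).mono (by linarith [c_anti (Nat.add_le_add_right h N)])
  · exact ne_top_of_le_ne_top ENNReal.one_ne_top (lintegral_F₀_le_one Γ ν _)

lemma S_neg {x : ℝ} (hx : x < 0) : S Γ ν x = 0 := by
  apply le_antisymm
  · have h1 : S Γ ν x ≤ g Γ ν (x / 2) := (g_mono Γ ν).rightLim_le (by linarith)
    have h2 : g Γ ν (x / 2) = 0 := by
      unfold g; rw [F₀_neg Γ ν (by linarith)]; simp
    linarith
  · have h1 : g Γ ν x ≤ S Γ ν x := (g_mono Γ ν).le_rightLim le_rfl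
    have h2 : 0 ≤ g Γ ν x := ENNReal.toReal_nonneg
    linarith

lemma S_ge (hΓ : 0 < Γ) {x : ℝ} (hx : Γ ≤ x) : S Γ ν x = 1 := by
  apply le_antisymm
  · have h1 : S Γ ν x ≤ g Γ ν (x + 1) := (g_mono Γ ν).rightLim_le (lt_add_one x)
    have h2 : g Γ ν (x + 1) = 1 := by
      unfold g; rw [F₀_ge Γ ν hΓ (by linarith)]; simp
    linarith
  · have h1 : g Γ ν x ≤ S Γ ν x := (g_mono Γ ν).le_rightLim (le_refl x)
    have h2 : g Γ ν x = 1 := by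
      unfold g; rw [F₀_ge Γ ν hΓ hx]; simp
    linarith

lemma S_tendsto_bot : Tendsto (S Γ ν) atBot (𝓝 0) := by
  apply Tendsto.congr' _ tendsto_const_nhds
  filter_upwards [eventually_lt_atBot (0:ℝ)] with x hx
  exact (S_neg Γ ν hx).symm

lemma S_tendsto_top (hΓ : 0 < Γ) : Tendsto (S Γ ν) atTop (𝓝 1) := by
  apply Tendsto.congr' _ tendsto_const_nhds
  filter_upwards [eventually_ge_atTop Γ] with x hx
  exact (S_ge Γ ν hΓ hx).symm

end Stmt12Aux

open Stmt12Aux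

theorem stmt12 (Γ : ℝ) (hΓ : 0 < Γ) (ν : Measure ℝ) [IsProbabilityMeasure ν] :
    ∃ μ : Measure ℝ, IsProbabilityMeasure μ ∧ μ (Set.Icc 0 Γ)ᶜ = 0 ∧
      Measure.map (fun p : ℝ × ℝ => min Γ (max 0 (p.1 + p.2))) (μ.prod ν) = μ := by
  set μ : Measure ℝ := (S Γ ν).measure with hμ
  have hbot := S_tendsto_bot Γ ν
  have htop := S_tendsto_top Γ ν hΓ
  have hIic : ∀ x, μ (Set.Iic x) = Fp Γ ν x := by
    intro x
    rw [hμ, (S Γ ν).measure_Iic hbot x]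
    simp [Fp]
  have hprob : IsProbabilityMeasure μ := by
    constructor
    rw [hμ, (S Γ ν).measure_univ hbot htop]
    norm_num
  refine ⟨μ, hprob, ?_, ?_⟩
  · -- support in [0, Γ]
    have h1 : μ (Set.Ioi Γ) = 0 := by
      have := measure_compl (μ := μ) measurableSet_Iic (measure_ne_top μ (Set.Iic Γ))
      rw [Set.compl_Iic] at this
      rw [this, hIic, Fp_ge Γ ν hΓ (le_refl Γ), measure_univ]
      simp
    have h2 : μ (Set.Iio 0) = 0 := by
      have hsub : Set.Iio (0:ℝ) ⊆ ⋃ n : ℕ, Set.Iic (-(c n)) := by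
        intro x hx
        simp only [Set.mem_Iio] at hx
        obtain ⟨n, hn⟩ := c_small (show (0:ℝ) < -x by linarith)
        exact Set.mem_iUnion.mpr ⟨n, by simp only [Set.mem_Iic]; linarith⟩
      have : μ (⋃ n : ℕ, Set.Iic (-(c n))) ≤ ∑' n : ℕ, μ (Set.Iic (-(c n))) :=
        measure_iUnion_le _
      have hz : ∀ n : ℕ, μ (Set.Iic (-(c n))) = 0 := fun n => by
        rw [hIic, Fp_neg Γ ν (by linarith [c_pos n])]
      apply le_antisymm _ zero_le'
      calc μ (Set.Iio 0) ≤ μ (⋃ n : ℕ, Set.Iic (-(c n))) := measure_mono hsub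
      _ ≤ ∑' n : ℕ, μ (Set.Iic (-(c n))) := measure_iUnion_le _
      _ = 0 := by simp [hz]
    have hcompl : (Set.Icc (0:ℝ) Γ)ᶜ = Set.Iio 0 ∪ Set.Ioi Γ := by
      ext y
      simp only [Set.mem_compl_iff, Set.mem_Icc, not_and_or, not_le, Set.mem_union,
        Set.mem_Iio, Set.mem_Ioi]
    rw [hcompl]
    exact measure_union_null h2 h1
  · -- invariance
    set f : ℝ × ℝ → ℝ := fun p => min Γ (max 0 (p.1 + p.2)) with hf
    have hfm : Measurable f :=
      measurable_const.min (measurable_const.max (measurable_fst.add measurable_snd))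
    haveI : IsProbabilityMeasure (Measure.map f (μ.prod ν)) :=
      Measure.isProbabilityMeasure_map hfm.aemeasurable
    apply Measure.ext_of_Iic
    intro x
    rw [Measure.map_apply hfm measurableSet_Iic, hIic]
    rcases lt_or_ge x 0 with hx | hx
    · have hempty : f ⁻¹' Set.Iic x = ∅ := by
        ext p
        simp only [Set.mem_preimage, Set.mem_Iic, Set.mem_empty_iff_false, iff_false, not_le]
        have h0 : 0 ≤ f p := le_min hΓ.le (le_max_left _ _)
        linarith
      rw [hempty, Fp_neg Γ ν hx]
      simp
    rcases lt_or_ge x Γ with hxΓ | hxΓ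
    · have hset : f ⁻¹' Set.Iic x = {p : ℝ × ℝ | p.1 + p.2 ≤ x} := by
        ext ⟨e, y⟩
        simp only [Set.mem_preimage, Set.mem_Iic, Set.mem_setOf_eq, hf]
        constructor
        · intro h
          rcases min_le_iff.mp h with h1 | h1
          · linarith
          · exact (max_le_iff.mp h1).2
        · intro h
          exact (min_le_right _ _).trans (max_le hx h)
      have hms : MeasurableSet {p : ℝ × ℝ | p.1 + p.2 ≤ x} :=
        measurableSet_le (measurable_fst.add measurable_snd) measurable_const
      rw [hset, Measure.prod_apply_symm hms]
      have hinner : ∀ y : ℝ, (fun e => (e, y)) ⁻¹' {p : ℝ × ℝ | p.1 + p.2 ≤ x}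
          = Set.Iic (x - y) := by
        intro y
        ext e
        simp only [Set.mem_preimage, Set.mem_setOf_eq, Set.mem_Iic]
        constructor <;> intro h <;> linarith
      calc ∫⁻ y, μ ((fun e => (e, y)) ⁻¹' {p : ℝ × ℝ | p.1 + p.2 ≤ x}) ∂ν
          = ∫⁻ y, Fp Γ ν (x - y) ∂ν := by
            apply lintegral_congr fun y => ?_
            rw [hinner y, hIic]
      _ = Fp Γ ν x := (Fp_mid Γ ν hx hxΓ).symm
    · have huniv : f ⁻¹' Set.Iic x = Set.univ := by
        ext p
        simp only [Set.mem_preimage, Set.mem_Iic, Set.mem_univ, iff_true]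
        exact (min_le_left _ _).trans hxΓ
      rw [huniv, Fp_ge Γ ν hΓ hxΓ, measure_univ]
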